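/- (Interpolation estimate for distribution functions.) Let 1 ≤ α < ∞. There exists a constant C = C(α) > 0 such that for every measurable f : ℝ³×ℝ³ → [0,∞) with f ∈ L^α(ℝ⁶) and ∫∫_{ℝ⁶} |p|² f(q,p) dq dp < ∞, the spatial density ρ_f satisfies ‖ρ_f‖_{L^{(5α−3)/(3α−1)}(ℝ³)} ≤ C ‖f‖_{L^α(ℝ⁶)}^{2α/(5α−3)} · ( ∫∫_{ℝ⁶} |p|² f(q,p) dq dp )^{3(α−1)/(5α−3)}. -/

import Mathlib

open MeasureTheory Real
open scoped ENNReal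

noncomputable section

abbrev E3 := EuclideanSpace ℝ (Fin 3)

/-- The spatial density `ρ_f(x) = ∫ f(x,p) dp` of a phase-space distribution. -/
def rhoOf (f : E3 × E3 → ℝ) (x : E3) : ℝ := ∫ p : E3, f (x, p)

open Metric in
lemma opt_lemma {β : ℝ} (hβ : 0 < β) {A B X : ℝ≥0∞} (hA : A ≠ 0) (hB : B ≠ 0)
    (h : ∀ t : ℝ, 0 < t → X ≤ A * ENNReal.ofReal t ^ β + B * ENNReal.ofReal t ^ (-2 : ℝ)) :
    X ≤ 2 * A ^ (2 / (β + 2)) * B ^ (β / (β + 2)) := by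
  have hβ2 : (0:ℝ) < β + 2 := by linarith
  have hθ : 0 < 2 / (β + 2) := by positivity
  have hθ' : 0 < β / (β + 2) := by positivity
  rcases eq_or_ne A ∞ with rfl | hA'
  · have h1 : (∞ : ℝ≥0∞) ^ (2 / (β + 2)) = ∞ := ENNReal.top_rpow_of_pos hθ
    rw [h1]
    have hBne : B ^ (β / (β + 2)) ≠ 0 := by
      simp [ENNReal.rpow_eq_zero_iff, hB, not_lt.2 hθ'.le]
    rw [mul_comm (2 : ℝ≥0∞) ∞, mul_assoc, ENNReal.top_mul (by simp [hBne])]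
    exact le_top
  rcases eq_or_ne B ∞ with rfl | hB'
  · have h1 : (∞ : ℝ≥0∞) ^ (β / (β + 2)) = ∞ := ENNReal.top_rpow_of_pos hθ'
    rw [h1, ENNReal.mul_top]
    · exact le_top
    · have : A ^ (2 / (β + 2)) ≠ 0 := by
        simp [ENNReal.rpow_eq_zero_iff, hA, not_lt.2 hθ.le]
      simp [this]
  have ha : 0 < A.toReal := ENNReal.toReal_pos hA hA'
  have hb : 0 < B.toReal := ENNReal.toReal_pos hB hB'
  set a := A.toReal with ha'
  set b := B.toReal with hb'
  set t : ℝ := (b / a) ^ ((1:ℝ) / (β + 2)) with ht'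
  have htpos : 0 < t := by positivity
  have hba : (0:ℝ) < b / a := by positivity
  have htβ : t ^ β = (b / a) ^ (β / (β + 2)) := by
    rw [ht', ← Real.rpow_mul hba.le]
    ring_nf
  have htm2 : t ^ (-2:ℝ) = (b / a) ^ (-(2 / (β + 2))) := by
    rw [ht', ← Real.rpow_mul hba.le]
    ring_nf
  have e1 : 2 / (β + 2) = 1 - β / (β + 2) := by field_simp; ring
  have e2 : β / (β + 2) = 1 - 2 / (β + 2) := by field_simp; ring
  have key1 : a * t ^ β = a ^ (2 / (β + 2)) * b ^ (β / (β + 2)) := by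
    rw [htβ, Real.div_rpow hb.le ha.le, e1, Real.rpow_sub ha, Real.rpow_one]
    field_simp
  have key2 : b * t ^ (-2:ℝ) = a ^ (2 / (β + 2)) * b ^ (β / (β + 2)) := by
    rw [htm2, Real.rpow_neg hba.le, Real.div_rpow hb.le ha.le, e2,
      Real.rpow_sub hb, Real.rpow_one]
    field_simp
  have hAe : A = ENNReal.ofReal a := (ENNReal.ofReal_toReal hA').symm
  have hBe : B = ENNReal.ofReal b := (ENNReal.ofReal_toReal hB').symm
  have := h t htpos
  rw [hAe, hBe, ENNReal.ofReal_rpow_of_pos htpos, ENNReal.ofReal_rpow_of_pos htpos,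
    ← ENNReal.ofReal_mul ha.le, ← ENNReal.ofReal_mul hb.le, key1, key2, ← two_mul] at this
  refine this.trans_eq ?_
  rw [ENNReal.ofReal_mul (by positivity), ← ENNReal.ofReal_rpow_of_pos ha,
    ← ENNReal.ofReal_rpow_of_pos hb, ha', hb', ENNReal.ofReal_toReal hA',
    ENNReal.ofReal_toReal hB', mul_assoc]

open Metric in
lemma ptwise {α : ℝ} (hα : 1 < α) (h : E3 → ℝ≥0∞) (hm : Measurable h) :
    ∫⁻ p, h p ≤ 2 * ((volume (ball (0:E3) 1)) ^ (1 - 1/α) *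
        (∫⁻ p, h p ^ α) ^ (1/α)) ^ (2 / (3*(1 - 1/α) + 2)) *
      (∫⁻ p, (‖p‖₊ : ℝ≥0∞) ^ 2 * h p) ^ ((3*(1 - 1/α)) / (3*(1 - 1/α) + 2)) := by
  have hαpos : (0:ℝ) < α := by linarith
  set β : ℝ := 3 * (1 - 1/α) with hβ'
  have hβ : 0 < β := by
    have : 1/α < 1 := by rw [div_lt_one hαpos]; linarith
    simp only [hβ']; nlinarith
  set c := volume (ball (0:E3) 1) with hc'
  have hc0 : c ≠ 0 := (Metric.measure_ball_pos _ _ one_pos).ne'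
  have hctop : c ≠ ⊤ := measure_ball_lt_top.ne
  set G := (∫⁻ p, h p ^ α) ^ (1/α) with hG'
  set K := ∫⁻ p, (‖p‖₊ : ℝ≥0∞) ^ 2 * h p with hK'
  -- degenerate cases
  rcases eq_or_ne G 0 with hG0 | hGne
  · rw [hG'] at hG0
    have hint : ∫⁻ p, h p ^ α = 0 := by
      rcases ENNReal.rpow_eq_zero_iff.1 hG0 with ⟨h1, _⟩ | ⟨_, h2⟩
      · exact h1
      · exact absurd h2 (not_lt.2 (by positivity))
    have hh0 : ∀ᵐ p, h p ^ α = 0 := (lintegral_eq_zero_iff (hm.pow_const α)).1 hint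
    have : ∫⁻ p, h p = 0 := by
      rw [lintegral_eq_zero_iff hm]
      filter_upwards [hh0] with p hp
      rcases ENNReal.rpow_eq_zero_iff.1 hp with ⟨h1, _⟩ | ⟨_, h2⟩
      · exact h1
      · linarith
    simp [this]
  rcases eq_or_ne K 0 with hK0 | hKne
  · have hh0 : ∀ᵐ p, (‖p‖₊ : ℝ≥0∞) ^ 2 * h p = 0 := (lintegral_eq_zero_iff
      ((measurable_nnnorm.comp measurable_id).coe_nnreal_ennreal.pow_const 2 |>.mul hm)).1 hK0
    have hzero : ∀ᵐ (p : E3), h p = 0 := by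
      have hsing : ∀ᵐ (p : E3), p ≠ 0 := by
        rw [ae_iff]
        simpa using measure_singleton (0 : E3)
      filter_upwards [hh0, hsing] with p hp hpne
      have : (‖p‖₊ : ℝ≥0∞) ^ 2 ≠ 0 := by
        simp [nnnorm_eq_zero, hpne, pow_eq_zero_iff]
      rcases mul_eq_zero.1 hp with h1 | h1
      · exact absurd h1 this
      · exact h1
    have : ∫⁻ p, h p = 0 := (lintegral_eq_zero_iff hm).2 hzero
    simp [this]
  -- main case
  have hAne : c ^ (1 - 1/α) * G ≠ 0 := by
    refine mul_ne_zero ?_ hGne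
    simp [ENNReal.rpow_eq_zero_iff, hc0, hctop]
  refine opt_lemma hβ hAne hKne ?_
  intro t ht
  have hballm : MeasurableSet (ball (0:E3) t) := measurableSet_ball
  have hsplit : ∫⁻ p, h p
      = (∫⁻ p in ball (0:E3) t, h p) + ∫⁻ p in (ball (0:E3) t)ᶜ, h p :=
    (lintegral_add_compl (f := fun p => h p) hballm).symm
  -- Hölder on the ball
  have hconj : α.HolderConjugate (α / (α - 1)) := Real.HolderConjugate.conjExponent hα
  have hball : ∫⁻ p in ball (0:E3) t, h p
      ≤ G * (volume (ball (0:E3) t)) ^ (1 - 1/α) := by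
    have hind : Measurable ((ball (0:E3) t).indicator (1 : E3 → ℝ≥0∞)) :=
      measurable_one.indicator hballm
    have : ∫⁻ p in ball (0:E3) t, h p
        = ∫⁻ p, (h * ((ball (0:E3) t).indicator (1 : E3 → ℝ≥0∞))) p := by
      rw [← lintegral_indicator hballm]
      congr 1
      funext p
      by_cases hp : p ∈ ball (0:E3) t <;>
        simp [Set.indicator_apply, hp]
    rw [this]
    refine (ENNReal.lintegral_mul_le_Lp_mul_Lq volume hconj hm.aemeasurable
      hind.aemeasurable).trans_eq ?_
    congr 1
    have h1 : ∀ p : E3, ((ball (0:E3) t).indicator (1 : E3 → ℝ≥0∞) p) ^ (α / (α - 1))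
        = (ball (0:E3) t).indicator (1 : E3 → ℝ≥0∞) p := by
      intro p
      by_cases hp : p ∈ ball (0:E3) t <;>
        simp [Set.indicator_apply, hp, ENNReal.zero_rpow_of_pos hconj.symm.pos]
    simp only [h1]
    rw [lintegral_indicator_one hballm]
    congr 1
    field_simp
  -- volume of the ball
  have hvol : (volume (ball (0:E3) t)) ^ (1 - 1/α)
      = ENNReal.ofReal t ^ β * c ^ (1 - 1/α) := by
    have hexp : (0:ℝ) ≤ 1 - 1/α := by
      rw [sub_nonneg, div_le_one hαpos]; linarith
    have hfr : Module.finrank ℝ E3 = 3 := by simp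
    rw [hc', Measure.addHaar_ball_of_pos _ _ ht,
      ENNReal.mul_rpow_of_nonneg _ _ hexp, hfr]
    congr 1
    rw [← Real.rpow_natCast t 3,
      ENNReal.ofReal_rpow_of_pos (by positivity : (0:ℝ) < t ^ ((3:ℕ):ℝ)),
      ← Real.rpow_mul ht.le, ← ENNReal.ofReal_rpow_of_pos ht]
    congr 1
  -- tail estimate
  have htail : ∫⁻ p in (ball (0:E3) t)ᶜ, h p ≤ K * ENNReal.ofReal t ^ (-2:ℝ) := by
    have htne : ENNReal.ofReal t ≠ 0 := by simp [ht]
    have hpt : ∀ p ∈ (ball (0:E3) t)ᶜ, h p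
        ≤ ENNReal.ofReal t ^ (-2:ℝ) * ((‖p‖₊ : ℝ≥0∞) ^ 2 * h p) := by
      intro p hp
      have hnorm : ENNReal.ofReal t ≤ (‖p‖₊ : ℝ≥0∞) := by
        rw [Set.mem_compl_iff, mem_ball, dist_zero_right, not_lt] at hp
        rw [← ENNReal.ofReal_coe_nnreal, coe_nnnorm]
        exact ENNReal.ofReal_le_ofReal hp
      have hpow : ENNReal.ofReal t ^ 2 ≤ (‖p‖₊ : ℝ≥0∞) ^ 2 := pow_le_pow_left' hnorm 2
      calc h p = (ENNReal.ofReal t ^ (-2:ℝ) * ENNReal.ofReal t ^ (2:ℝ)) * h p := by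
            rw [← ENNReal.rpow_add _ _ htne ENNReal.ofReal_ne_top]
            norm_num
        _ ≤ (ENNReal.ofReal t ^ (-2:ℝ) * (‖p‖₊ : ℝ≥0∞) ^ 2) * h p := by
            gcongr
            rw [← ENNReal.rpow_natCast (ENNReal.ofReal t) 2] at hpow
            exact_mod_cast hpow
        _ = ENNReal.ofReal t ^ (-2:ℝ) * ((‖p‖₊ : ℝ≥0∞) ^ 2 * h p) := by ring
    calc ∫⁻ p in (ball (0:E3) t)ᶜ, h p
        ≤ ∫⁻ p in (ball (0:E3) t)ᶜ, ENNReal.ofReal t ^ (-2:ℝ) * ((‖p‖₊ : ℝ≥0∞) ^ 2 * h p) :=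
          setLIntegral_mono (by fun_prop) hpt
      _ ≤ ∫⁻ p, ENNReal.ofReal t ^ (-2:ℝ) * ((‖p‖₊ : ℝ≥0∞) ^ 2 * h p) :=
          setLIntegral_le_lintegral _ _
      _ = ENNReal.ofReal t ^ (-2:ℝ) * K := by
          rw [hK', lintegral_const_mul _ (by fun_prop)]
      _ = K * ENNReal.ofReal t ^ (-2:ℝ) := mul_comm _ _
  calc ∫⁻ p, h p = (∫⁻ p in ball (0:E3) t, h p) + ∫⁻ p in (ball (0:E3) t)ᶜ, h p := hsplit
    _ ≤ G * (ENNReal.ofReal t ^ β * c ^ (1 - 1/α)) + K * ENNReal.ofReal t ^ (-2:ℝ) :=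
        add_le_add (hball.trans_eq (by rw [hvol])) htail
    _ = c ^ (1 - 1/α) * G * ENNReal.ofReal t ^ β + K * ENNReal.ofReal t ^ (-2:ℝ) := by
        ring_nf

lemma tonelli_aux (g : E3 × E3 → ℝ≥0∞) (hg : Measurable g) :
    ∫⁻ z, g z = ∫⁻ x, ∫⁻ p, g (x, p) := by
  rw [Measure.volume_eq_prod, lintegral_prod g hg.aemeasurable]

lemma rho_le_aux (f : E3 × E3 → ℝ) (hf : ∀ z, 0 ≤ f z) (x : E3) :
    ENNReal.ofReal (rhoOf f x) ≤ ∫⁻ p : E3, ENNReal.ofReal (f (x, p)) := by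
  by_cases hi : Integrable (fun p : E3 => f (x, p)) volume
  · rw [rhoOf, ofReal_integral_eq_lintegral_ofReal hi (ae_of_all _ fun p => hf _)]
  · rw [rhoOf, integral_undef hi]
    simp

lemma kinetic_aux (f : E3 × E3 → ℝ) (hf : ∀ z, 0 ≤ f z) (hm : Measurable f)
    (hint : Integrable (fun z : E3 × E3 => ‖z.2‖ ^ 2 * f z)) :
    ENNReal.ofReal (∫ z : E3 × E3, ‖z.2‖ ^ 2 * f z)
      = ∫⁻ x : E3, ∫⁻ p : E3, (‖p‖₊ : ℝ≥0∞) ^ 2 * ENNReal.ofReal (f (x, p)) := by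
  rw [ofReal_integral_eq_lintegral_ofReal hint
    (ae_of_all _ fun z => mul_nonneg (by positivity) (hf z))]
  rw [tonelli_aux _ (by fun_prop)]
  congr 1
  funext x
  congr 1
  funext p
  rw [ENNReal.ofReal_mul (by positivity)]
  congr 1
  rw [← ENNReal.ofReal_coe_nnreal, coe_nnnorm, ← ENNReal.ofReal_pow (norm_nonneg p)]

/-- Interpolation estimate: for `1 ≤ α < ∞` there is `C = C(α) > 0` such that for every
nonnegative measurable `f ∈ L^α(ℝ⁶)` with finite kinetic integral `∫∫ |p|² f < ∞`,
`‖ρ_f‖_{L^{(5α-3)/(3α-1)}} ≤ C ‖f‖_{L^α}^{2α/(5α-3)} (∫∫ |p|² f)^{3(α-1)/(5α-3)}`. -/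
theorem interpolation_estimate (α : ℝ) (hα : 1 ≤ α) :
    ∃ C > (0 : ℝ), ∀ f : E3 × E3 → ℝ, Measurable f → (∀ z, 0 ≤ f z) →
      MemLp f (ENNReal.ofReal α) →
      Integrable (fun z : E3 × E3 => ‖z.2‖ ^ 2 * f z) →
      eLpNorm (rhoOf f) (ENNReal.ofReal ((5 * α - 3) / (3 * α - 1))) volume ≤
        ENNReal.ofReal (C * (eLpNorm f (ENNReal.ofReal α) volume).toReal ^ (2 * α / (5 * α - 3)) *
          (∫ z : E3 × E3, ‖z.2‖ ^ 2 * f z) ^ (3 * (α - 1) / (5 * α - 3))) := by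
  rcases eq_or_lt_of_le hα with heq | hα1
  · -- the case α = 1
    refine ⟨1, one_pos, ?_⟩
    subst heq
    intro f hfm hf hmem hint
    have e1 : (5 * (1:ℝ) - 3) / (3 * 1 - 1) = 1 := by norm_num
    have e2 : 2 * (1:ℝ) / (5 * 1 - 3) = 1 := by norm_num
    have e3 : 3 * ((1:ℝ) - 1) / (5 * 1 - 3) = 0 := by norm_num
    rw [e1, e2, e3, Real.rpow_one, Real.rpow_zero, mul_one, one_mul, ENNReal.ofReal_one]
    rw [ENNReal.ofReal_one] at hmem
    have hfin : eLpNorm f 1 volume ≠ ⊤ := hmem.2.ne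
    calc eLpNorm (rhoOf f) 1 volume = ∫⁻ x, ENNReal.ofReal (rhoOf f x) := by
          rw [eLpNorm_one_eq_lintegral_enorm]
          congr 1
          funext x
          exact Real.enorm_eq_ofReal (integral_nonneg fun p => hf _)
      _ ≤ ∫⁻ x, ∫⁻ p, ENNReal.ofReal (f (x, p)) := lintegral_mono fun x => rho_le_aux f hf x
      _ = ∫⁻ z, ENNReal.ofReal (f z) :=
          (tonelli_aux _ (ENNReal.measurable_ofReal.comp hfm)).symm
      _ = eLpNorm f 1 volume := by
          rw [eLpNorm_one_eq_lintegral_enorm]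
          congr 1
          funext z
          rw [Real.enorm_eq_ofReal (hf z)]
      _ = ENNReal.ofReal (eLpNorm f 1 volume).toReal := (ENNReal.ofReal_toReal hfin).symm
  · -- the case α > 1
    have hα0 : (0:ℝ) < α := by linarith
    have h5 : (0:ℝ) < 5 * α - 3 := by linarith
    have h3 : (0:ℝ) < 3 * α - 1 := by linarith
    have h1 : (0:ℝ) < α - 1 := by linarith
    set β : ℝ := 3 * (1 - 1/α) with hβdef
    have hβ2 : (0:ℝ) < β + 2 := by
      have : 1/α < 1 := by rw [div_lt_one hα0]; linarith
      rw [hβdef]; nlinarith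
    set θ : ℝ := 2 * α / (5 * α - 3) with hθdef
    set s : ℝ := 3 * (α - 1) / (5 * α - 3) with hsdef
    set r : ℝ := (5 * α - 3) / (3 * α - 1) with hrdef
    have hθpos : 0 < θ := div_pos (by linarith) h5
    have hspos : 0 < s := div_pos (by linarith) h5
    have hrpos : 0 < r := div_pos h5 h3
    set P : ℝ := (3 * α - 1) / 2 with hPdef
    set Q : ℝ := (3 * α - 1) / (3 * (α - 1)) with hQdef
    have hPQ : P.HolderConjugate Q := by
      refine (Real.holderConjugate_iff_eq_conjExponent ?_).2 ?_
      · rw [hPdef]; rw [lt_div_iff₀ (by norm_num : (0:ℝ) < 2)]; linarith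
      · rw [hPdef, hQdef]
        have : (3*α-1)/2 - 1 = 3*(α-1)/2 := by ring
        rw [this, div_div_div_cancel_right₀ (by norm_num)]
    set cE := volume (Metric.ball (0:E3) 1) with hcE
    have hc0 : cE ≠ 0 := (Metric.measure_ball_pos _ _ one_pos).ne'
    have hctop : cE ≠ ⊤ := measure_ball_lt_top.ne
    set D : ℝ≥0∞ := 2 * cE ^ ((1 - 1/α) * θ) with hDdef
    have hDne : D ≠ 0 := by
      rw [hDdef]
      refine mul_ne_zero (by norm_num) ?_
      simp [ENNReal.rpow_eq_zero_iff, hc0, hctop]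
    have hDtop : D ≠ ⊤ := by
      rw [hDdef]
      refine ENNReal.mul_ne_top (by norm_num) ?_
      have hexp : (0:ℝ) ≤ (1 - 1/α) * θ := by
        refine mul_nonneg ?_ hθpos.le
        rw [sub_nonneg, div_le_one hα0]; linarith
      exact ENNReal.rpow_ne_top_of_nonneg hexp hctop
    refine ⟨D.toReal, ENNReal.toReal_pos hDne hDtop, ?_⟩
    intro f hfm hf hmem hint
    set F : E3 × E3 → ℝ≥0∞ := fun z => ENNReal.ofReal (f z) with hFdef
    have hFm : Measurable F := ENNReal.measurable_ofReal.comp hfm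
    set G : E3 → ℝ≥0∞ := fun x => (∫⁻ p, F (x, p) ^ α) ^ (1/α) with hGdef
    set K : E3 → ℝ≥0∞ := fun x => ∫⁻ p, (‖p‖₊ : ℝ≥0∞) ^ 2 * F (x, p) with hKdef
    have hGm : Measurable G := ((hFm.pow_const α).lintegral_prod_right').pow_const (1/α)
    have hKm : Measurable K := by
      apply Measurable.lintegral_prod_right'
        (f := fun z : E3 × E3 => (‖z.2‖₊ : ℝ≥0∞) ^ 2 * F z)
      fun_prop
    set N := eLpNorm f (ENNReal.ofReal α) volume with hNdef
    have hNfin : N ≠ ⊤ := hmem.2.ne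
    set T : ℝ := ∫ z : E3 × E3, ‖z.2‖ ^ 2 * f z with hTdef
    have hTnn : 0 ≤ T := integral_nonneg fun z => mul_nonneg (by positivity) (hf z)
    -- pointwise estimate
    have hpt : ∀ x, ∫⁻ p, F (x, p) ≤ D * (G x ^ θ * K x ^ s) := by
      intro x
      have h2 := ptwise hα1 (fun p => F (x, p)) (hFm.comp measurable_prodMk_left)
      have eθ : 2 / (β + 2) = θ := by
        rw [hβdef, hθdef]
        rw [div_eq_div_iff (by rw [← hβdef]; exact hβ2.ne') h5.ne']
        field_simp
        ring
      have es : β / (β + 2) = s := by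
        rw [hβdef, hsdef]
        rw [div_eq_div_iff (by rw [← hβdef]; exact hβ2.ne') h5.ne']
        field_simp
        ring
      rw [eθ, es] at h2
      refine h2.trans_eq ?_
      simp only [hGdef, hKdef, hDdef, hcE]
      rw [ENNReal.mul_rpow_of_nonneg (volume (Metric.ball (0:E3) 1) ^ (1 - 1/α)) _ hθpos.le,
        ← ENNReal.rpow_mul (volume (Metric.ball (0:E3) 1))]
      ring
    -- the ^α integral of G
    have hNpow : ∫⁻ x, G x ^ α = N ^ α := by
      have hGx : ∀ x, G x ^ α = ∫⁻ p, F (x, p) ^ α := by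
        intro x
        simp only [hGdef]
        rw [← ENNReal.rpow_mul, one_div, inv_mul_cancel₀ hα0.ne', ENNReal.rpow_one]
      simp only [hGx]
      rw [← tonelli_aux _ (hFm.pow_const α), hNdef,
        eLpNorm_eq_lintegral_rpow_enorm_toReal (by simp [hα0]) (by simp),
        ENNReal.toReal_ofReal hα0.le, ← ENNReal.rpow_mul, one_div,
        inv_mul_cancel₀ hα0.ne', ENNReal.rpow_one]
      congr 1
      funext z
      rw [Real.enorm_eq_ofReal (hf z)]
    -- the integral of K
    have hKint : ∫⁻ x, K x = ENNReal.ofReal T := by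
      rw [hTdef, kinetic_aux f hf hfm hint]
    -- Hölder
    have hGP : ∀ x, (G x ^ (θ * r)) ^ P = G x ^ α := by
      intro x
      rw [← ENNReal.rpow_mul]
      congr 1
      rw [hθdef, hrdef, hPdef]
      field_simp
      exact div_self (mul_pos (show (0:ℝ) < α * 5 - 3 by linarith) (show (0:ℝ) < α * 3 - 1 by linarith)).ne'
    have hKQ : ∀ x, (K x ^ (s * r)) ^ Q = K x := by
      intro x
      rw [← ENNReal.rpow_mul]
      have : s * r * Q = 1 := by
        rw [hsdef, hrdef, hQdef]
        field_simp
        exact div_self (show (0:ℝ) < α * 5 - 3 by linarith).ne'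
      rw [this, ENNReal.rpow_one]
    have hHold : ∫⁻ x, G x ^ (θ * r) * K x ^ (s * r)
        ≤ (∫⁻ x, G x ^ α) ^ (1/P) * (∫⁻ x, K x) ^ (1/Q) := by
      have := ENNReal.lintegral_mul_le_Lp_mul_Lq volume hPQ
        ((hGm.pow_const (θ * r)).aemeasurable) ((hKm.pow_const (s * r)).aemeasurable)
      simp only [Pi.mul_apply] at this
      refine this.trans_eq ?_
      congr 1
      · congr 1
        exact lintegral_congr fun x => hGP x
      · congr 1
        exact lintegral_congr fun x => hKQ x
    -- main computation
    have hρr : eLpNorm (rhoOf f) (ENNReal.ofReal r) volume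
        = (∫⁻ x, ENNReal.ofReal (rhoOf f x) ^ r) ^ (1/r) := by
      rw [eLpNorm_eq_lintegral_rpow_enorm_toReal (by simp [hrpos]) (by simp),
        ENNReal.toReal_ofReal hrpos.le]
      congr 1
      apply lintegral_congr
      intro x
      exact congrArg (· ^ r) (Real.enorm_eq_ofReal (integral_nonneg fun p => hf _))
    rw [hρr]
    calc (∫⁻ x, ENNReal.ofReal (rhoOf f x) ^ r) ^ (1/r)
        ≤ (∫⁻ x, (D * (G x ^ θ * K x ^ s)) ^ r) ^ (1/r) := by
          gcongr with x
          exact (rho_le_aux f hf x).trans (hpt x)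
      _ = (D ^ r * ∫⁻ x, G x ^ (θ * r) * K x ^ (s * r)) ^ (1/r) := by
          congr 1
          rw [← lintegral_const_mul (f := fun x => G x ^ (θ * r) * K x ^ (s * r)) _ ((hGm.pow_const (θ * r)).mul (hKm.pow_const (s * r)))]
          have hDsplit : ∀ d u v : ℝ≥0∞, (d * (u ^ θ * v ^ s)) ^ r
              = d ^ r * (u ^ (θ * r) * v ^ (s * r)) := by
            intro d u v
            rw [ENNReal.mul_rpow_of_nonneg d _ hrpos.le,
              ENNReal.mul_rpow_of_nonneg (u ^ θ) _ hrpos.le,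
              ← ENNReal.rpow_mul u, ← ENNReal.rpow_mul v]
          exact lintegral_congr fun x => hDsplit D (G x) (K x)
      _ ≤ (D ^ r * ((∫⁻ x, G x ^ α) ^ (1/P) * (∫⁻ x, K x) ^ (1/Q))) ^ (1/r) := by
          gcongr
      _ = D * ((N ^ α) ^ (1/P)) ^ (1/r) * ((ENNReal.ofReal T) ^ (1/Q)) ^ (1/r) := by
          rw [hNpow, hKint]
          have step45 : ∀ d n k : ℝ≥0∞, (d ^ r * (n ^ (1/P) * k ^ (1/Q))) ^ (1/r)
              = d * (n ^ (1/P)) ^ (1/r) * (k ^ (1/Q)) ^ (1/r) := by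
            intro d n k
            rw [ENNReal.mul_rpow_of_nonneg _ _ (by positivity),
              ENNReal.mul_rpow_of_nonneg (n ^ (1/P)) _ (by positivity),
              ← ENNReal.rpow_mul d, mul_one_div_cancel hrpos.ne', ENNReal.rpow_one, mul_assoc]
          exact step45 D (N ^ α) (ENNReal.ofReal T)
      _ = D * N ^ θ * ENNReal.ofReal T ^ s := by
          have e4 : ∀ n : ℝ≥0∞, ((n ^ α) ^ (1/P)) ^ (1/r) = n ^ θ := by
            intro n
            rw [← ENNReal.rpow_mul n, ← ENNReal.rpow_mul n]
            congr 1
            rw [hθdef, hPdef, hrdef]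
            rw [one_div_div, one_div_div]
            field_simp
            rw [div_mul_cancel_left₀ (show (0:ℝ) < α*3-1 by linarith).ne', one_div]
          have e5 : ∀ n : ℝ≥0∞, (n ^ (1/Q)) ^ (1/r) = n ^ s := by
            intro n
            rw [← ENNReal.rpow_mul n]
            congr 1
            rw [hsdef, hQdef, hrdef]
            field_simp
          rw [e4, e5]
      _ = ENNReal.ofReal (D.toReal * N.toReal ^ θ * T ^ s) := by
          rw [ENNReal.ofReal_mul (by positivity), ENNReal.ofReal_mul ENNReal.toReal_nonneg,
            ← ENNReal.ofReal_rpow_of_nonneg ENNReal.toReal_nonneg hθpos.le,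
            ← ENNReal.ofReal_rpow_of_nonneg hTnn hspos.le,
            ENNReal.ofReal_toReal hDtop, ENNReal.ofReal_toReal hNfin]

end
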